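/- Let ζ : ℝ → [0,∞) be continuous with ∫₀^∞ t^{n−1} ζ(t) dt < ∞. Then for every convex, coercive function u : ℝⁿ → ℝ, the integral ∫_{ℝⁿ} ζ(u(x)) dx is finite, and the map u ↦ ∫_{ℝⁿ} ζ(u(x)) dx satisfies the valuation property: Z(u) + Z(v) = Z(u ∨ v) + Z(u ∧ v) whenever u, v, u ∧ v are all convex and coercive. -/

import Mathlib

open MeasureTheory Filter

section Stmt16Aux
open Set Metric

set_option maxHeartbeats 1000000 in
private lemma stmt16_aux (n : ℕ) (hn : 1 ≤ n) (ζ : ℝ → ℝ) (hζc : Continuous ζ) (hζ0 : ∀ t, 0 ≤ ζ t)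
    (hmom : IntegrableOn (fun t : ℝ => t ^ (n - 1) * ζ t) (Set.Ioi 0))
    (u : EuclideanSpace ℝ (Fin n) → ℝ) (hu : ConvexOn ℝ Set.univ u)
    (huc : Tendsto u (cocompact (EuclideanSpace ℝ (Fin n))) atTop) :
    Integrable (fun x => ζ (u x)) := by
  have hucont : Continuous u := by
    rw [← continuousOn_univ]
    exact hu.continuousOn isOpen_univ
  have humeas : Measurable u := hucont.measurable
  have hfr : Module.finrank ℝ (EuclideanSpace ℝ (Fin n)) = n := finrank_euclideanSpace_fin
  -- a radius outside which u is large
  have h1 : ∀ᶠ x in cocompact (EuclideanSpace ℝ (Fin n)), u 0 + 1 ≤ u x :=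
    huc.eventually (eventually_ge_atTop (u 0 + 1))
  rw [hasBasis_cocompact.eventually_iff] at h1
  obtain ⟨K, hK, hKsub⟩ := h1
  obtain ⟨R₀, hR₀⟩ := hK.isBounded.subset_closedBall 0
  set R : ℝ := max R₀ 0 + 1 with hRdef
  have hR0 : 0 < R := by
    have : (0:ℝ) ≤ max R₀ 0 := le_max_right _ _
    linarith
  have hRbig : ∀ x : EuclideanSpace ℝ (Fin n), R ≤ ‖x‖ → u 0 + 1 ≤ u x := by
    intro x hx
    refine hKsub ?_
    intro hxK
    have h2 := hR₀ hxK
    rw [mem_closedBall, dist_zero_right] at h2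
    have h3 : R₀ ≤ max R₀ 0 := le_max_left _ _
    linarith
  -- linear growth
  have hgrow : ∀ x : EuclideanSpace ℝ (Fin n), R ≤ ‖x‖ → u 0 + ‖x‖ / R ≤ u x := by
    intro x hx
    have hx0 : 0 < ‖x‖ := lt_of_lt_of_le hR0 hx
    set l : ℝ := R / ‖x‖ with hldef
    have hl0 : 0 < l := div_pos hR0 hx0
    have hl1 : l ≤ 1 := (div_le_one hx0).mpr hx
    have hz : ‖l • x‖ = R := by
      rw [norm_smul, Real.norm_eq_abs, abs_of_pos hl0, hldef, div_mul_cancel₀ _ hx0.ne']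
    have hz1 : u 0 + 1 ≤ u (l • x) := hRbig _ hz.ge
    have hconv := hu.2 (mem_univ (0 : EuclideanSpace ℝ (Fin n))) (mem_univ x)
      (sub_nonneg.mpr hl1) hl0.le (by ring : (1 - l) + l = 1)
    rw [smul_zero, zero_add, smul_eq_mul, smul_eq_mul] at hconv
    have hxr : ‖x‖ / R = 1 / l := by rw [hldef, one_div_div]
    rw [hxr]
    have h3 : l * (u 0 + 1 / l) ≤ l * u x := by
      rw [mul_add, mul_one_div, div_self hl0.ne']
      nlinarith
    exact le_of_mul_le_mul_left h3 hl0
  have hms : ∀ t : ℝ, MeasurableSet {x : EuclideanSpace ℝ (Fin n) | u x ≤ t} := fun t =>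
    measurableSet_le humeas measurable_const
  have hsub : ∀ t : ℝ, u 0 + 1 ≤ t →
      {x : EuclideanSpace ℝ (Fin n) | u x ≤ t} ⊆ closedBall 0 (R * (t - u 0)) := by
    intro t ht x hx
    rw [mem_closedBall, dist_zero_right]
    by_contra hcon
    push_neg at hcon
    have h1 : R ≤ R * (t - u 0) := by nlinarith
    have h2 := hgrow x (h1.trans hcon.le)
    have h3 : t - u 0 < ‖x‖ / R := by rw [lt_div_iff₀ hR0]; nlinarith
    simp only [mem_setOf_eq] at hx
    linarith
  have hfin : ∀ t : ℝ, volume {x : EuclideanSpace ℝ (Fin n) | u x ≤ t} < ⊤ := by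
    intro t
    refine lt_of_le_of_lt (measure_mono ?_) (measure_closedBall_lt_top
      (x := (0:EuclideanSpace ℝ (Fin n))) (r := R * (max t (u 0 + 1) - u 0)))
    intro x hx
    simp only [mem_setOf_eq] at hx
    refine hsub _ (le_max_right _ _) ?_
    simp only [mem_setOf_eq]
    exact le_trans hx (le_max_left _ _)
  -- minimizer
  obtain ⟨x₁, hx₁mem, hx₁⟩ := (isCompact_closedBall (0:EuclideanSpace ℝ (Fin n)) R).exists_isMinOn
    ⟨0, mem_closedBall_self hR0.le⟩ hucont.continuousOn
  set m : ℝ := u x₁ with hmdef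
  have hmu0 : m ≤ u 0 := hx₁ (mem_closedBall_self hR0.le)
  have hmglob : ∀ x, m ≤ u x := by
    intro x
    by_cases hx : x ∈ closedBall (0:EuclideanSpace ℝ (Fin n)) R
    · exact hx₁ hx
    · have h2 : R ≤ ‖x‖ := by
        rw [mem_closedBall, dist_zero_right, not_le] at hx
        exact hx.le
      linarith [hRbig x h2]
  set T₀ : ℝ := max (u 0 + 1) (|m| + 1) with hT₀def
  have hT₀1 : 1 ≤ T₀ := le_trans (by linarith [abs_nonneg m]) (le_max_right _ _)
  have hT₀u0 : u 0 + 1 ≤ T₀ := le_max_left _ _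
  have hmT₀ : m < T₀ :=
    lt_of_le_of_lt (le_abs_self m) (lt_of_lt_of_le (lt_add_one _) (le_max_right _ _))
  have habs : ∀ t, T₀ ≤ t → t - m ≤ 2 * t := by
    intro t ht
    have h1 : |m| + 1 ≤ t := le_trans (le_max_right _ _) ht
    have h2 := neg_abs_le m
    linarith
  set S : ℝ → ℝ := fun t => (volume {x : EuclideanSpace ℝ (Fin n) | u x ≤ t}).toReal with hSdef
  have hSmono : Monotone S := by
    intro s t hst
    exact ENNReal.toReal_mono (hfin t).ne (measure_mono fun x hx => le_trans hx hst)
  set C₁ : ℝ := (volume (ball (0:EuclideanSpace ℝ (Fin n)) 1)).toReal with hC₁def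
  have hC₁ : 0 ≤ C₁ := ENNReal.toReal_nonneg
  set K₁ : ℝ := C₁ * R ^ n with hK₁def
  have hSbound : ∀ t, T₀ ≤ t → S t ≤ K₁ * (t - m) ^ n := by
    intro t ht
    have h1 : u 0 + 1 ≤ t := le_trans hT₀u0 ht
    have h2 : 0 ≤ R * (t - u 0) := by nlinarith
    have h3 : volume {x : EuclideanSpace ℝ (Fin n) | u x ≤ t} ≤ volume (closedBall (0:EuclideanSpace ℝ (Fin n)) (R * (t - u 0))) := measure_mono (hsub t h1)
    rw [Measure.addHaar_closedBall _ _ h2, hfr] at h3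
    have hne : ENNReal.ofReal ((R * (t - u 0)) ^ n) *
        volume (ball (0:EuclideanSpace ℝ (Fin n)) 1) ≠ ⊤ :=
      ENNReal.mul_ne_top ENNReal.ofReal_ne_top measure_ball_lt_top.ne
    have h4 := ENNReal.toReal_mono hne h3
    rw [ENNReal.toReal_mul, ENNReal.toReal_ofReal (by positivity)] at h4
    have h5 : (R * (t - u 0)) ^ n ≤ R ^ n * (t - m) ^ n := by
      rw [mul_pow]
      gcongr
      all_goals linarith
    calc S t ≤ (R * (t - u 0)) ^ n * C₁ := h4
      _ ≤ R ^ n * (t - m) ^ n * C₁ := mul_le_mul_of_nonneg_right h5 hC₁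
      _ = K₁ * (t - m) ^ n := by ring
  have hscale : ∀ s t : ℝ, T₀ ≤ s → s ≤ t → ((s - m) / (t - m)) ^ n * S t ≤ S s := by
    intro s t hs hst
    have hms' : m < s := lt_of_lt_of_le hmT₀ hs
    have hmt : m < t := lt_of_lt_of_le hms' hst
    set l : ℝ := (s - m) / (t - m) with hldef
    have hl0 : 0 < l := div_pos (by linarith) (by linarith)
    have hl1 : l ≤ 1 := (div_le_one (by linarith)).mpr (by linarith)
    have himg : (AffineMap.homothety x₁ l) '' {x : EuclideanSpace ℝ (Fin n) | u x ≤ t}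
        ⊆ {x : EuclideanSpace ℝ (Fin n) | u x ≤ s} := by
      rintro _ ⟨y, hy, rfl⟩
      simp only [mem_setOf_eq] at hy ⊢
      have h1 : (AffineMap.homothety x₁ l) y = (1 - l) • x₁ + l • y := by
        simp [AffineMap.homothety_apply, sub_smul, smul_sub]
        abel
      rw [h1]
      have h2 := hu.2 (mem_univ x₁) (mem_univ y) (sub_nonneg.mpr hl1) hl0.le
        (by ring : (1 - l) + l = 1)
      rw [smul_eq_mul, smul_eq_mul] at h2
      have h3 : l * (t - m) = s - m := div_mul_cancel₀ _ (by linarith : t - m ≠ 0)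
      have h4 : (1 - l) * m + l * u y ≤ s := by nlinarith
      rw [← hmdef] at h2
      linarith
    have hvol : volume ((AffineMap.homothety x₁ l) '' {x : EuclideanSpace ℝ (Fin n) | u x ≤ t}) ≤ volume {x : EuclideanSpace ℝ (Fin n) | u x ≤ s} := measure_mono himg
    rw [Measure.addHaar_image_homothety, hfr, abs_of_pos (pow_pos hl0 n)] at hvol
    have h6 := ENNReal.toReal_mono (hfin s).ne hvol
    rw [ENNReal.toReal_mul, ENNReal.toReal_ofReal (by positivity)] at h6
    exact h6
  set Kc : ℝ := K₁ * 2 ^ (n - 1) with hKcdef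
  have hK₁0 : 0 ≤ K₁ := by positivity
  have hKc0 : 0 ≤ Kc := by positivity
  have hincr : ∀ s t : ℝ, T₀ ≤ s → s ≤ t → S t - S s ≤ Kc * (t ^ n - s ^ n) := by
    intro s t hs hst
    have ht : T₀ ≤ t := hs.trans hst
    have hms' : m < s := lt_of_lt_of_le hmT₀ hs
    have hs0 : 0 < s := lt_of_lt_of_le (lt_of_lt_of_le one_pos hT₀1) hs
    have ht0 : 0 < t := lt_of_lt_of_le hs0 hst
    set l : ℝ := (s - m) / (t - m) with hldef
    have hl0 : 0 ≤ l := le_of_lt (div_pos (by linarith) (by linarith))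
    have hl1 : l ≤ 1 := (div_le_one (by linarith)).mpr (by linarith)
    have h1 : S t - S s ≤ (1 - l ^ n) * S t := by
      have := hscale s t hs hst
      nlinarith
    have hlt : l ^ n * (t - m) ^ n = (s - m) ^ n := by
      rw [← mul_pow, div_mul_cancel₀ _ (by linarith : t - m ≠ 0)]
    have h2 : (1 - l ^ n) * S t ≤ (1 - l ^ n) * (K₁ * (t - m) ^ n) := by
      apply mul_le_mul_of_nonneg_left (hSbound t ht)
      linarith [pow_le_one₀ (n := n) hl0 hl1]
    have h3 : (1 - l ^ n) * (K₁ * (t - m) ^ n) = K₁ * ((t - m) ^ n - (s - m) ^ n) := by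
      rw [← hlt]; ring
    have h4 : (t - m) ^ n - (s - m) ^ n ≤ 2 ^ (n - 1) * (t ^ n - s ^ n) := by
      have hgs1 := geom_sum₂_mul (t - m) (s - m) n
      have hgs2 := geom_sum₂_mul t s n
      set A : ℝ := ∑ i ∈ Finset.range n, (t - m) ^ i * (s - m) ^ (n - 1 - i) with hAdef
      set B : ℝ := ∑ i ∈ Finset.range n, t ^ i * s ^ (n - 1 - i) with hBdef
      have hsum : A ≤ 2 ^ (n - 1) * B := by
        rw [hAdef, hBdef, Finset.mul_sum]
        apply Finset.sum_le_sum
        intro i hi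
        rw [Finset.mem_range] at hi
        have he : i + (n - 1 - i) = n - 1 := by omega
        have h2p : (2:ℝ) ^ i * 2 ^ (n - 1 - i) = 2 ^ (n - 1) := by
          rw [← pow_add, he]
        calc (t - m) ^ i * (s - m) ^ (n - 1 - i)
            ≤ (2 * t) ^ i * (2 * s) ^ (n - 1 - i) := by
              apply mul_le_mul
              · exact pow_le_pow_left₀ (by linarith) (habs t ht) i
              · exact pow_le_pow_left₀ (by linarith) (habs s hs) _
              · exact pow_nonneg (by linarith) _
              · positivity
          _ = (2 ^ i * 2 ^ (n - 1 - i)) * (t ^ i * s ^ (n - 1 - i)) := by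
              rw [mul_pow, mul_pow]; ring
          _ = 2 ^ (n - 1) * (t ^ i * s ^ (n - 1 - i)) := by rw [h2p]
      have hd : t - m - (s - m) = t - s := by ring
      rw [hd] at hgs1
      have hts : 0 ≤ t - s := by linarith
      calc (t - m) ^ n - (s - m) ^ n = A * (t - s) := hgs1.symm
        _ ≤ (2 ^ (n - 1) * B) * (t - s) := mul_le_mul_of_nonneg_right hsum hts
        _ = 2 ^ (n - 1) * (B * (t - s)) := by ring
        _ = 2 ^ (n - 1) * (t ^ n - s ^ n) := by rw [hgs2]
    have h5 : K₁ * ((t - m) ^ n - (s - m) ^ n) ≤ K₁ * (2 ^ (n - 1) * (t ^ n - s ^ n)) :=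
      mul_le_mul_of_nonneg_left h4 hK₁0
    calc S t - S s ≤ (1 - l ^ n) * S t := h1
      _ ≤ (1 - l ^ n) * (K₁ * (t - m) ^ n) := h2
      _ = K₁ * ((t - m) ^ n - (s - m) ^ n) := h3
      _ ≤ K₁ * (2 ^ (n - 1) * (t ^ n - s ^ n)) := h5
      _ = Kc * (t ^ n - s ^ n) := by rw [hKcdef]; ring
  -- right continuity of S
  have hSrc : ∀ x : ℝ, ContinuousWithinAt S (Ici x) x := by
    intro x
    rw [← continuousWithinAt_Ioi_iff_Ici]
    have h2 := tendsto_measure_biInter_gt (μ := (volume : Measure (EuclideanSpace ℝ (Fin n))))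
      (s := fun t : ℝ => {y : EuclideanSpace ℝ (Fin n) | u y ≤ t}) (a := x)
      (fun r _ => (hms r).nullMeasurableSet)
      (fun i j _ hij y hy => le_trans hy hij)
      ⟨x + 1, by linarith, (hfin _).ne⟩
    have h3 : ⋂ r, ⋂ (_ : r > x), {y : EuclideanSpace ℝ (Fin n) | u y ≤ r}
        = {y : EuclideanSpace ℝ (Fin n) | u y ≤ x} := by
      ext y
      simp only [mem_iInter, mem_setOf_eq]
      constructor
      · intro h
        by_contra hc
        push_neg at hc
        have := h ((x + u y) / 2) (by linarith)
        linarith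
      · intro h r hr
        exact h.trans hr.le
    rw [h3] at h2
    exact (ENNReal.tendsto_toReal (hfin x).ne).comp h2
  -- Stieltjes functions
  have hmaxmono : Monotone (fun t : ℝ => max t T₀) := fun a b h => max_le_max h le_rfl
  have hmaxrc : ∀ x : ℝ, ContinuousWithinAt (fun t : ℝ => S (max t T₀)) (Ici x) x := by
    intro x
    exact ContinuousWithinAt.comp (g := S) (f := fun t : ℝ => max t T₀) (hSrc (max x T₀))
      ((continuous_id.max continuous_const).continuousWithinAt)
      (fun t ht => show max x T₀ ≤ max t T₀ from max_le_max ht le_rfl)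
  set F : StieltjesFunction ℝ := ⟨fun t => S (max t T₀), hSmono.comp hmaxmono, hmaxrc⟩ with hFdef
  have hmax0 : ∀ t : ℝ, (0:ℝ) ≤ max t T₀ := fun t => le_trans (by linarith) (le_max_right t T₀)
  set G : StieltjesFunction ℝ := ⟨fun t => Kc * (max t T₀) ^ n,
    fun a b h => mul_le_mul_of_nonneg_left
      (pow_le_pow_left₀ (hmax0 a) (max_le_max h le_rfl) n) hKc0,
    fun x => (continuous_const.mul (((continuous_id.max continuous_const)).pow n)).continuousWithinAt⟩
    with hGdef
  have hDmono : Monotone (fun t => Kc * (max t T₀) ^ n - S (max t T₀)) := by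
    intro a b h
    have h1 := hincr (max a T₀) (max b T₀) (le_max_right a T₀) (max_le_max h le_rfl)
    have h2 : Kc * ((max b T₀) ^ n - (max a T₀) ^ n)
        = Kc * (max b T₀) ^ n - Kc * (max a T₀) ^ n := by ring
    simp only []
    linarith [h1, h2.ge, h2.le]
  set D : StieltjesFunction ℝ := ⟨fun t => Kc * (max t T₀) ^ n - S (max t T₀), hDmono,
    fun x => ((continuous_const.mul (((continuous_id.max continuous_const)).pow n)).continuousWithinAt).sub
      (hmaxrc x)⟩ with hDdef
  -- the pushforward measure
  set μ : Measure ℝ := Measure.map u volume with hμdef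
  have hμapp : ∀ s : Set ℝ, MeasurableSet s → μ s = volume (u ⁻¹' s) := fun s hs =>
    Measure.map_apply humeas hs
  have hμIoc : ∀ a b : ℝ, a ≤ b → μ (Ioc a b) = ENNReal.ofReal (S b - S a) := by
    intro a b hab
    rw [hμapp _ measurableSet_Ioc]
    have h1 : u ⁻¹' (Ioc a b) = {x : EuclideanSpace ℝ (Fin n) | u x ≤ b}
        \ {x : EuclideanSpace ℝ (Fin n) | u x ≤ a} := by
      ext x
      simp only [mem_preimage, mem_Ioc, mem_diff, mem_setOf_eq, not_le]
      tauto
    have hss : {x : EuclideanSpace ℝ (Fin n) | u x ≤ a} ⊆ {x : EuclideanSpace ℝ (Fin n) | u x ≤ b} :=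
      fun x hx => le_trans hx hab
    rw [h1, measure_diff hss (hms a).nullMeasurableSet (hfin a).ne]
    rw [ENNReal.ofReal_sub _ ENNReal.toReal_nonneg, ENNReal.ofReal_toReal (hfin b).ne,
      ENNReal.ofReal_toReal (hfin a).ne]
  have hFμ : F.measure = μ.restrict (Ioi T₀) := by
    refine Measure.ext_of_Ioc _ _ (fun a b hab => ?_)
    rw [StieltjesFunction.measure_Ioc, Measure.restrict_apply measurableSet_Ioc,
      Set.Ioc_inter_Ioi]
    rcases le_or_gt b T₀ with hb | hb
    · have h1 : max a T₀ = T₀ := max_eq_right (hab.le.trans hb)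
      have h2 : max b T₀ = T₀ := max_eq_right hb
      have hemp : Ioc (a ⊔ T₀) b = ∅ := by
        rw [Set.Ioc_eq_empty_iff]
        show ¬ max a T₀ < b
        rw [h1]
        exact not_lt.mpr hb
      rw [hemp]
      show ENNReal.ofReal (S (max b T₀) - S (max a T₀)) = _
      rw [h1, h2, sub_self, ENNReal.ofReal_zero, measure_empty]
    · have h2 : max b T₀ = b := max_eq_left hb.le
      have h4 : max a T₀ ≤ b := max_le hab.le hb.le
      rw [show (a ⊔ T₀ : ℝ) = max a T₀ from rfl, hμIoc _ _ h4]
      show ENNReal.ofReal (S (max b T₀) - S (max a T₀)) = _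
      rw [h2]
  have hFDG : F.measure + D.measure = G.measure := by
    refine (Measure.ext_of_Ioc G.measure (F.measure + D.measure) (fun a b hab => ?_)).symm
    rw [Measure.add_apply, StieltjesFunction.measure_Ioc, StieltjesFunction.measure_Ioc,
      StieltjesFunction.measure_Ioc]
    refine Eq.symm ?_
    have h1 : (0:ℝ) ≤ S (max b T₀) - S (max a T₀) :=
      sub_nonneg.mpr (hSmono.comp hmaxmono hab.le)
    have h2 : (0:ℝ) ≤ (Kc * (max b T₀) ^ n - S (max b T₀))
        - (Kc * (max a T₀) ^ n - S (max a T₀)) := sub_nonneg.mpr (hDmono hab.le)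
    show ENNReal.ofReal (S (max b T₀) - S (max a T₀)) +
      ENNReal.ofReal ((Kc * (max b T₀) ^ n - S (max b T₀))
        - (Kc * (max a T₀) ^ n - S (max a T₀)))
      = ENNReal.ofReal (Kc * (max b T₀) ^ n - Kc * (max a T₀) ^ n)
    rw [← ENNReal.ofReal_add h1 h2]
    congr 1
    ring
  set g : ℝ → ENNReal :=
    fun t => indicator (Ioi T₀) (fun t => ENNReal.ofReal (Kc * n * t ^ (n - 1))) t with hgdef
  have hgmeas : Measurable g := by
    apply Measurable.indicator _ measurableSet_Ioi
    exact ENNReal.measurable_ofReal.comp ((measurable_id.pow_const (n - 1)).const_mul (Kc * n))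
  have hGw : G.measure = volume.withDensity g := by
    refine Measure.ext_of_Ioc _ _ (fun a b hab => ?_)
    rw [StieltjesFunction.measure_Ioc, withDensity_apply _ measurableSet_Ioc]
    rw [hgdef]
    simp only []
    rw [lintegral_indicator measurableSet_Ioi, Measure.restrict_restrict measurableSet_Ioi,
      inter_comm, Set.Ioc_inter_Ioi]
    rcases le_or_gt b T₀ with hb | hb
    · have h1 : max a T₀ = T₀ := max_eq_right (hab.le.trans hb)
      have hemp : Ioc (a ⊔ T₀) b = ∅ := by
        rw [Set.Ioc_eq_empty_iff]
        show ¬ max a T₀ < b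
        rw [h1]
        exact not_lt.mpr hb
      rw [hemp, Measure.restrict_empty, lintegral_zero_measure]
      show ENNReal.ofReal (Kc * (max b T₀) ^ n - Kc * (max a T₀) ^ n) = 0
      rw [max_eq_right hb, h1, sub_self, ENNReal.ofReal_zero]
    · have ha'b : max a T₀ < b := by
        rw [max_lt_iff]
        exact ⟨hab, hb⟩
      have hT₀a' : T₀ ≤ max a T₀ := le_max_right a T₀
      have ha'0 : (0:ℝ) < max a T₀ := lt_of_lt_of_le (show (0:ℝ) < T₀ by linarith) hT₀a'
      have hInt : IntegrableOn (fun t : ℝ => Kc * n * t ^ (n - 1)) (Ioc (max a T₀) b) :=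
        (continuous_const.mul (continuous_pow (n - 1))).integrableOn_Ioc
      have hnn : 0 ≤ᵐ[volume.restrict (Ioc (max a T₀) b)]
          fun t : ℝ => Kc * n * t ^ (n - 1) := by
        filter_upwards [ae_restrict_mem measurableSet_Ioc] with t ht
        have ht0 : 0 < t := lt_trans ha'0 ht.1
        positivity
      rw [show (a ⊔ T₀ : ℝ) = max a T₀ from rfl,
        ← ofReal_integral_eq_lintegral_ofReal hInt hnn,
        ← intervalIntegral.integral_of_le ha'b.le]
      have hcast : ((n - 1 : ℕ) : ℝ) + 1 = (n : ℝ) := by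
        rw [Nat.cast_sub hn, Nat.cast_one]
        ring
      have hval : ∫ t in (max a T₀)..b, Kc * n * t ^ (n - 1)
          = Kc * n * ((b ^ n - (max a T₀) ^ n) / n) := by
        rw [intervalIntegral.integral_const_mul, integral_pow, Nat.sub_add_cancel hn, hcast]
      rw [hval]
      show ENNReal.ofReal (Kc * (max b T₀) ^ n - Kc * (max a T₀) ^ n) = _
      have hn0 : (0:ℝ) < n := by exact_mod_cast lt_of_lt_of_le one_pos hn
      rw [max_eq_left hb.le]
      congr 1
      field_simp
  -- assembling
  have hζmeas : Measurable fun t : ℝ => ENNReal.ofReal (ζ t) :=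
    ENNReal.measurable_ofReal.comp hζc.measurable
  have hkey : ∫⁻ x, ENNReal.ofReal (ζ (u x)) < ⊤ := by
    rw [← lintegral_map hζmeas humeas, ← hμdef,
      ← lintegral_add_compl (fun t => ENNReal.ofReal (ζ t)) (measurableSet_Iic (a := T₀)),
      compl_Iic]
    apply ENNReal.add_lt_top.mpr
    constructor
    · -- base region
      obtain ⟨tM, htMmem, htM⟩ := isCompact_Icc.exists_isMaxOn (nonempty_Icc.mpr hmT₀.le)
        hζc.continuousOn
      have hsplit : Iic T₀ = Iio m ∪ Icc m T₀ := (Iio_union_Icc_eq_Iic hmT₀.le).symm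
      have hzero : μ (Iio m) = 0 := by
        rw [hμapp _ measurableSet_Iio]
        have : u ⁻¹' (Iio m) = ∅ := by
          ext x
          simp only [mem_preimage, mem_Iio, mem_empty_iff_false, iff_false, not_lt]
          exact hmglob x
        rw [this, measure_empty]
      have hb1 : ∫⁻ t in Iic T₀, ENNReal.ofReal (ζ t) ∂μ
          ≤ ∫⁻ t in Iio m, ENNReal.ofReal (ζ t) ∂μ
            + ∫⁻ t in Icc m T₀, ENNReal.ofReal (ζ t) ∂μ := by
        rw [hsplit]
        exact lintegral_union_le _ _ _
      have hb2 : ∫⁻ t in Iio m, ENNReal.ofReal (ζ t) ∂μ = 0 :=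
        setLIntegral_measure_zero _ _ hzero
      have hb3 : ∫⁻ t in Icc m T₀, ENNReal.ofReal (ζ t) ∂μ
          ≤ ENNReal.ofReal (ζ tM) * μ (Icc m T₀) := by
        rw [← setLIntegral_const]
        exact setLIntegral_mono measurable_const
          (fun x hx => ENNReal.ofReal_le_ofReal (htM hx))
      have hb4 : μ (Icc m T₀) < ⊤ := by
        refine lt_of_le_of_lt ?_ (hfin T₀)
        rw [hμapp _ measurableSet_Icc]
        apply measure_mono
        intro x hx
        exact hx.2
      calc ∫⁻ t in Iic T₀, ENNReal.ofReal (ζ t) ∂μ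
          ≤ ENNReal.ofReal (ζ tM) * μ (Icc m T₀) := by
            refine le_trans hb1 ?_
            rw [hb2, zero_add]
            exact hb3
        _ < ⊤ := ENNReal.mul_lt_top ENNReal.ofReal_lt_top hb4
    · -- tail region
      have h1 : ∫⁻ t in Ioi T₀, ENNReal.ofReal (ζ t) ∂μ
          = ∫⁻ t, ENNReal.ofReal (ζ t) ∂F.measure := by
        rw [hFμ]
      rw [h1]
      have h2 : ∫⁻ t, ENNReal.ofReal (ζ t) ∂F.measure
          ≤ ∫⁻ t, ENNReal.ofReal (ζ t) ∂G.measure := by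
        refine lintegral_mono' ?_ le_rfl
        rw [← hFDG]
        exact Measure.le_add_right le_rfl
      refine lt_of_le_of_lt h2 ?_
      rw [hGw, lintegral_withDensity_eq_lintegral_mul _ hgmeas hζmeas]
      have h3 : ∀ t, (g * fun t => ENNReal.ofReal (ζ t)) t
          = indicator (Ioi T₀)
            (fun t => ENNReal.ofReal (Kc * n * t ^ (n - 1)) * ENNReal.ofReal (ζ t)) t := by
        intro t
        by_cases ht : t ∈ Ioi T₀
        · simp [hgdef, indicator_of_mem ht]
        · simp [hgdef, indicator_of_notMem ht]
      calc ∫⁻ t, (g * fun t => ENNReal.ofReal (ζ t)) t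
          = ∫⁻ t in Ioi T₀, ENNReal.ofReal (Kc * n * t ^ (n - 1)) * ENNReal.ofReal (ζ t) := by
            rw [lintegral_congr h3, lintegral_indicator measurableSet_Ioi]
        _ = ∫⁻ t in Ioi T₀, ENNReal.ofReal (Kc * n) * ENNReal.ofReal (t ^ (n - 1) * ζ t) := by
            refine setLIntegral_congr_fun measurableSet_Ioi (fun t ht => ?_)
            have ht0 : 0 < t := lt_of_lt_of_le (by linarith) (le_of_lt ht)
            rw [← ENNReal.ofReal_mul (by positivity), ← ENNReal.ofReal_mul (by positivity)]
            congr 1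
            ring
        _ = ENNReal.ofReal (Kc * n) * ∫⁻ t in Ioi T₀, ENNReal.ofReal (t ^ (n - 1) * ζ t) := by
            rw [lintegral_const_mul]
            exact ENNReal.measurable_ofReal.comp
              ((measurable_id.pow_const (n - 1)).mul hζc.measurable)
        _ ≤ ENNReal.ofReal (Kc * n) * ∫⁻ t in Ioi 0, ENNReal.ofReal (t ^ (n - 1) * ζ t) := by
            exact mul_le_mul_right (lintegral_mono_set (Ioi_subset_Ioi (by linarith))) _
        _ < ⊤ := ENNReal.mul_lt_top ENNReal.ofReal_lt_top hmom.lintegral_lt_top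
  refine ⟨(hζc.comp hucont).aestronglyMeasurable, ?_⟩
  rw [hasFiniteIntegral_iff_ofReal (ae_of_all _ fun x => hζ0 (u x))]
  exact hkey


end Stmt16Aux

/-- If `ζ : ℝ → [0,∞)` is continuous with
`∫₀^∞ t^(n−1) ζ(t) dt < ∞`, then `∫ ζ(u(x)) dx` is finite for every convex
coercive `u : ℝⁿ → ℝ`, and `u ↦ ∫ ζ(u(x)) dx` satisfies the valuation property. -/
theorem stmt16 (n : ℕ) (hn : 1 ≤ n) (ζ : ℝ → ℝ) (hζc : Continuous ζ) (hζ0 : ∀ t, 0 ≤ ζ t)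
    (hmom : IntegrableOn (fun t : ℝ => t ^ (n - 1) * ζ t) (Set.Ioi 0)) :
    (∀ u : EuclideanSpace ℝ (Fin n) → ℝ, ConvexOn ℝ Set.univ u →
      Tendsto u (cocompact (EuclideanSpace ℝ (Fin n))) atTop →
      Integrable (fun x => ζ (u x))) ∧
    (∀ u v : EuclideanSpace ℝ (Fin n) → ℝ,
      ConvexOn ℝ Set.univ u → Tendsto u (cocompact (EuclideanSpace ℝ (Fin n))) atTop →
      ConvexOn ℝ Set.univ v → Tendsto v (cocompact (EuclideanSpace ℝ (Fin n))) atTop →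
      ConvexOn ℝ Set.univ (fun x => min (u x) (v x)) →
      Tendsto (fun x => min (u x) (v x)) (cocompact (EuclideanSpace ℝ (Fin n))) atTop →
      (∫ x, ζ (u x)) + (∫ x, ζ (v x)) =
        (∫ x, ζ (max (u x) (v x))) + ∫ x, ζ (min (u x) (v x))) := by
  have hint : ∀ u : EuclideanSpace ℝ (Fin n) → ℝ, ConvexOn ℝ Set.univ u →
      Tendsto u (cocompact (EuclideanSpace ℝ (Fin n))) atTop →
      Integrable (fun x => ζ (u x)) :=
    fun u hu huc => stmt16_aux n hn ζ hζc hζ0 hmom u hu huc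
  refine ⟨hint, ?_⟩
  intro u v hu huc hv hvc hmin hminc
  have hmax : ConvexOn ℝ Set.univ (fun x => max (u x) (v x)) := hu.sup hv
  have hmaxc : Tendsto (fun x => max (u x) (v x))
      (cocompact (EuclideanSpace ℝ (Fin n))) atTop :=
    tendsto_atTop_mono (fun x => le_max_left (u x) (v x)) huc
  have h1 := hint u hu huc
  have h2 := hint v hv hvc
  have h3 := hint _ hmax hmaxc
  have h4 := hint _ hmin hminc
  have hpt : ∀ x, ζ (u x) + ζ (v x) = ζ (max (u x) (v x)) + ζ (min (u x) (v x)) := by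
    intro x
    rcases le_total (u x) (v x) with h | h
    · rw [max_eq_right h, min_eq_left h]; exact add_comm _ _
    · rw [max_eq_left h, min_eq_right h]
  calc (∫ x, ζ (u x)) + ∫ x, ζ (v x)
      = ∫ x, (ζ (u x) + ζ (v x)) := (integral_add h1 h2).symm
    _ = ∫ x, (ζ (max (u x) (v x)) + ζ (min (u x) (v x))) :=
        integral_congr_ae (Filter.Eventually.of_forall hpt)
    _ = (∫ x, ζ (max (u x) (v x))) + ∫ x, ζ (min (u x) (v x)) := integral_add h3 h4
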